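/- Let D = [1/2,1]² and let G₀(x,y) = 1/(4xy) on D. Suppose G: D → [0,1] is a measurable function with G(x, 1/2) = 1/(2x), G(1/2, y) = 1/(2y), G(x,y) ≤ min(1/(2x), 1/(2y)), and such that H := 1 − G/G₀ satisfies, for all (x,y) ∈ D: H(x,y)·(2+H(x,y))/(16xy) = ∫_{1/2}^x ∫_{1/2}^y G₀²(u,v)H(u,v)(2−H(u,v)) dv du − x∫_{1/2}^y G₀²(x,v)H(x,v)(2−H(x,v)) dv − y∫_{1/2}^x G₀²(u,y)H(u,y)(2−H(u,y)) du. Then H ≡ 0 on D, i.e., G = G₀ on D. -/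

import Mathlib

open MeasureTheory intervalIntegral Set Nat

lemma II' {f : ℝ → ℝ} {a b C : ℝ} (hab : a ≤ b)
    (hf : AEStronglyMeasurable f (volume.restrict (Set.Ioc a b)))
    (hC : ∀ t ∈ Set.Ioc a b, |f t| ≤ C) : IntervalIntegrable f volume a b := by
  rw [intervalIntegrable_iff_integrableOn_Ioc_of_le hab]
  refine Integrable.mono' (g := fun _ => C)
    (integrableOn_const measure_Ioc_lt_top.ne) hf ?_
  exact (ae_restrict_iff' measurableSet_Ioc).2
    (Filter.Eventually.of_forall fun t ht => by simpa [Real.norm_eq_abs] using hC t ht)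

lemma paramMeas {g : ℝ → ℝ → ℝ} (hg : Measurable fun p : ℝ × ℝ => g p.1 p.2) (c y : ℝ) :
    StronglyMeasurable (fun u => ∫ v in c..y, g u v) := by
  have h1 := hg.stronglyMeasurable.integral_prod_right' (ν := volume.restrict (Set.Ioc c y))
  have h2 := hg.stronglyMeasurable.integral_prod_right' (ν := volume.restrict (Set.Ioc y c))
  exact h1.sub h2

lemma intPow {x a b : ℝ} (n : ℕ) (ha : 0 ≤ x + a - 1) :
    ∫ v in a..b, (x + v - 1) ^ n ≤ (x + b - 1) ^ (n + 1) / (n + 1) := by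
  have h : ∀ v : ℝ, (x + v - 1) ^ n = (fun t : ℝ => t ^ n) (v + (x - 1)) := by
    intro v; simp; ring_nf
  calc ∫ v in a..b, (x + v - 1) ^ n = ∫ v in a..b, (fun t : ℝ => t ^ n) (v + (x - 1)) := by
        simp_rw [← h]
    _ = ∫ t in (a + (x - 1))..(b + (x - 1)), t ^ n := intervalIntegral.integral_comp_add_right _ _
    _ = ((b + (x - 1)) ^ (n+1) - (a + (x - 1)) ^ (n+1)) / (n + 1) := integral_pow n
    _ ≤ (x + b - 1) ^ (n + 1) / (n + 1) := by
        have h1 : (0:ℝ) ≤ (a + (x-1)) ^ (n+1) := pow_nonneg (by linarith) _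
        have h2 : b + (x - 1) = x + b - 1 := by ring
        have h3 : (0:ℝ) < (n:ℝ) + 1 := by positivity
        rw [h2, div_le_div_iff_of_pos_right h3]
        linarith

lemma factStep (n : ℕ) (c P : ℝ) : (c / (n !)) * (P / (n+1)) = c * P / ((n+1)!) := by
  have hf : (((n+1)! : ℕ) : ℝ) = ((n:ℝ)+1) * (n !) := by push_cast [Nat.factorial_succ]; ring
  have h1 : ((n ! : ℕ):ℝ) ≠ 0 := by positivity
  have h2 : ((n:ℝ)+1) ≠ 0 := by positivity
  rw [hf]
  field_simp

set_option maxHeartbeats 1000000 in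
lemma gronwall (f : ℝ → ℝ → ℝ)
    (hm : Measurable fun p : ℝ × ℝ => f p.1 p.2)
    (h0 : ∀ x y, 0 ≤ f x y)
    (h1 : ∀ x ∈ Set.Icc (1/2:ℝ) 1, ∀ y ∈ Set.Icc (1/2:ℝ) 1, f x y ≤ 1)
    (hineq : ∀ x ∈ Set.Icc (1/2:ℝ) 1, ∀ y ∈ Set.Icc (1/2:ℝ) 1,
      f x y ≤ 8 * ((∫ u in (1/2:ℝ)..x, ∫ v in (1/2:ℝ)..y, f u v)
        + (∫ v in (1/2:ℝ)..y, f x v) + (∫ u in (1/2:ℝ)..x, f u y))) :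
    ∀ x ∈ Set.Icc (1/2:ℝ) 1, ∀ y ∈ Set.Icc (1/2:ℝ) 1, f x y = 0 := by
  -- measurability of sections
  have hsec₁ : ∀ x : ℝ, Measurable fun v => f x v := fun x =>
    hm.comp (measurable_const.prodMk measurable_id)
  have hsec₂ : ∀ y : ℝ, Measurable fun u => f u y := fun y =>
    hm.comp (measurable_id.prodMk measurable_const)
  -- integrability of sections on D
  have hint₁ : ∀ x ∈ Set.Icc (1/2:ℝ) 1, ∀ y ∈ Set.Icc (1/2:ℝ) 1,
      IntervalIntegrable (fun v => f x v) volume (1/2) y := by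
    intro x hx y hy
    exact II' hy.1 (hsec₁ x).aestronglyMeasurable (fun t ht => by
      rw [abs_of_nonneg (h0 x t)]
      exact h1 x hx t ⟨le_of_lt ht.1, le_trans ht.2 hy.2⟩)
  have hint₂ : ∀ y ∈ Set.Icc (1/2:ℝ) 1, ∀ x ∈ Set.Icc (1/2:ℝ) 1,
      IntervalIntegrable (fun u => f u y) volume (1/2) x := by
    intro y hy x hx
    exact II' hx.1 (hsec₂ y).aestronglyMeasurable (fun t ht => by
      rw [abs_of_nonneg (h0 t y)]
      exact h1 t ⟨le_of_lt ht.1, le_trans ht.2 hx.2⟩ y hy)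
  -- the key single-integral estimate
  have key : ∀ n : ℕ,
      (∀ x ∈ Set.Icc (1/2:ℝ) 1, ∀ y ∈ Set.Icc (1/2:ℝ) 1,
        f x y ≤ 20 ^ n * (x + y - 1) ^ n / (n !)) →
      ∀ a ∈ Set.Icc (1/2:ℝ) 1, ∀ y ∈ Set.Icc (1/2:ℝ) 1,
        (∫ v in (1/2:ℝ)..y, f a v) ≤ 20 ^ n * (a + y - 1) ^ (n+1) / ((n+1)!) := by
    intro n IH a ha y hy
    have hpos : 0 ≤ a + (1/2:ℝ) - 1 := by have := ha.1; linarith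
    have hc : Continuous fun v : ℝ => 20 ^ n * (a + v - 1) ^ n / (n ! : ℝ) := by
      continuity
    calc (∫ v in (1/2:ℝ)..y, f a v)
        ≤ ∫ v in (1/2:ℝ)..y, 20 ^ n * (a + v - 1) ^ n / (n !) := by
          apply intervalIntegral.integral_mono_on hy.1 (hint₁ a ha y hy)
            (hc.intervalIntegrable _ _)
          intro v hv
          exact IH a ha v ⟨hv.1, le_trans hv.2 hy.2⟩
      _ = (20 ^ n / (n !)) * ∫ v in (1/2:ℝ)..y, (a + v - 1) ^ n := by
          rw [← intervalIntegral.integral_const_mul]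
          congr 1; funext v; ring
      _ ≤ (20 ^ n / (n !)) * ((a + y - 1) ^ (n+1) / (n+1)) := by
          apply mul_le_mul_of_nonneg_left (intPow n hpos) (by positivity)
      _ = 20 ^ n * (a + y - 1) ^ (n+1) / ((n+1)!) := factStep n _ _
  -- main induction
  have main : ∀ n : ℕ, ∀ x ∈ Set.Icc (1/2:ℝ) 1, ∀ y ∈ Set.Icc (1/2:ℝ) 1,
      f x y ≤ 20 ^ n * (x + y - 1) ^ n / (n !) := by
    intro n
    induction n with
    | zero => intro x hx y hy; simpa using h1 x hx y hy
    | succ n IH =>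
      intro x hx y hy
      have hxy : 0 ≤ x + y - 1 := by have := hx.1; have := hy.1; linarith
      have T1 : (∫ v in (1/2:ℝ)..y, f x v) ≤ 20 ^ n * (x + y - 1) ^ (n+1) / ((n+1)!) :=
        key n IH x hx y hy
      have T2 : (∫ u in (1/2:ℝ)..x, f u y) ≤ 20 ^ n * (x + y - 1) ^ (n+1) / ((n+1)!) := by
        have hpos : 0 ≤ y + (1/2:ℝ) - 1 := by have := hy.1; linarith
        have hc : Continuous fun u : ℝ => 20 ^ n * (y + u - 1) ^ n / (n ! : ℝ) := by
          continuity
        calc (∫ u in (1/2:ℝ)..x, f u y)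
            ≤ ∫ u in (1/2:ℝ)..x, 20 ^ n * (y + u - 1) ^ n / (n !) := by
              apply intervalIntegral.integral_mono_on hx.1 (hint₂ y hy x hx)
                (hc.intervalIntegrable _ _)
              intro u hu
              have := IH u ⟨hu.1, le_trans hu.2 hx.2⟩ y hy
              have he : (u + y - 1) ^ n = (y + u - 1) ^ n := by ring_nf
              rw [← he]; exact this
          _ = (20 ^ n / (n !)) * ∫ u in (1/2:ℝ)..x, (y + u - 1) ^ n := by
              rw [← intervalIntegral.integral_const_mul]
              congr 1; funext u; ring
          _ ≤ (20 ^ n / (n !)) * ((y + x - 1) ^ (n+1) / (n+1)) := by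
              apply mul_le_mul_of_nonneg_left (intPow n hpos) (by positivity)
          _ = 20 ^ n * (x + y - 1) ^ (n+1) / ((n+1)!) := by
              have h7 : (y + x - 1) ^ (n+1) = (x + y - 1) ^ (n+1) := by ring_nf
              rw [factStep n _ _, h7]
      have T3 : (∫ u in (1/2:ℝ)..x, ∫ v in (1/2:ℝ)..y, f u v)
          ≤ (1/2) * (20 ^ n * (x + y - 1) ^ (n+1) / ((n+1)!)) := by
        have hImeas : StronglyMeasurable (fun u => ∫ v in (1/2:ℝ)..y, f u v) :=
          paramMeas hm _ _
        have hIbd : ∀ u ∈ Set.Ioc (1/2:ℝ) x, |∫ v in (1/2:ℝ)..y, f u v| ≤ 1 := by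
          intro u hu
          have hu' : u ∈ Set.Icc (1/2:ℝ) 1 := ⟨le_of_lt hu.1, le_trans hu.2 hx.2⟩
          have h1' : (∫ v in (1/2:ℝ)..y, f u v) ≤ ∫ v in (1/2:ℝ)..y, (1:ℝ) := by
            apply intervalIntegral.integral_mono_on hy.1 (hint₁ u hu' y hy)
              (intervalIntegrable_const)
            intro v hv
            exact h1 u hu' v ⟨hv.1, le_trans hv.2 hy.2⟩
          have h2' : (0:ℝ) ≤ ∫ v in (1/2:ℝ)..y, f u v := by
            apply intervalIntegral.integral_nonneg hy.1
            intro v _; exact h0 u v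
          rw [abs_of_nonneg h2']
          simp at h1'
          have := hy.2; have := hy.1
          linarith
        have hIint : IntervalIntegrable (fun u => ∫ v in (1/2:ℝ)..y, f u v) volume (1/2) x :=
          II' hx.1 hImeas.aestronglyMeasurable.restrict hIbd
        have hc : Continuous fun u : ℝ => 20 ^ n * (u + y - 1) ^ (n+1) / (((n+1)!) : ℝ) := by
          exact Continuous.div_const (continuous_const.mul
            (((continuous_id.add continuous_const).sub continuous_const).pow (n+1))) _
        calc (∫ u in (1/2:ℝ)..x, ∫ v in (1/2:ℝ)..y, f u v)
            ≤ ∫ u in (1/2:ℝ)..x, 20 ^ n * (u + y - 1) ^ (n+1) / ((n+1)!) := by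
              apply intervalIntegral.integral_mono_on hx.1 hIint (hc.intervalIntegrable _ _)
              intro u hu
              have hu' : u ∈ Set.Icc (1/2:ℝ) 1 := ⟨hu.1, le_trans hu.2 hx.2⟩
              exact key n IH u hu' y hy
          _ ≤ ∫ u in (1/2:ℝ)..x, 20 ^ n * (x + y - 1) ^ (n+1) / ((n+1)!) := by
              apply intervalIntegral.integral_mono_on hx.1 (hc.intervalIntegrable _ _)
                (intervalIntegrable_const)
              intro u hu
              have h4 : 0 ≤ u + y - 1 := by have := hu.1; have := hy.1; linarith
              have h5 : (u + y - 1) ^ (n+1) ≤ (x + y - 1) ^ (n+1) :=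
                pow_le_pow_left₀ h4 (by linarith [hu.2]) _
              rw [div_le_div_iff_of_pos_right (by positivity : (0:ℝ) < (((n+1)!) : ℝ))]
              exact mul_le_mul_of_nonneg_left h5 (by positivity)
          _ = (x - 1/2) * (20 ^ n * (x + y - 1) ^ (n+1) / ((n+1)!)) := by
              rw [intervalIntegral.integral_const, smul_eq_mul]
          _ ≤ (1/2) * (20 ^ n * (x + y - 1) ^ (n+1) / ((n+1)!)) := by
              apply mul_le_mul_of_nonneg_right (by linarith [hx.2]) (by positivity)
      calc f x y ≤ 8 * ((∫ u in (1/2:ℝ)..x, ∫ v in (1/2:ℝ)..y, f u v)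
            + (∫ v in (1/2:ℝ)..y, f x v) + (∫ u in (1/2:ℝ)..x, f u y)) :=
            hineq x hx y hy
        _ ≤ 8 * ((1/2) * (20 ^ n * (x + y - 1) ^ (n+1) / ((n+1)!))
            + 20 ^ n * (x + y - 1) ^ (n+1) / ((n+1)!)
            + 20 ^ n * (x + y - 1) ^ (n+1) / ((n+1)!)) := by
            apply mul_le_mul_of_nonneg_left (by linarith) (by norm_num)
        _ = 20 * (20 ^ n * (x + y - 1) ^ (n+1) / ((n+1)!)) := by ring
        _ = 20 ^ (n+1) * (x + y - 1) ^ (n+1) / ((n+1)!) := by ring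
  -- conclusion
  intro x hx y hy
  have hlim : Filter.Tendsto (fun n : ℕ => (20:ℝ) ^ n / (n !)) Filter.atTop (nhds 0) :=
    FloorSemiring.tendsto_pow_div_factorial_atTop 20
  have hle : ∀ n : ℕ, f x y ≤ 20 ^ n / (n !) := by
    intro n
    have h4 : 0 ≤ x + y - 1 := by have := hx.1; have := hy.1; linarith
    have h5 : x + y - 1 ≤ 1 := by have := hx.2; have := hy.2; linarith
    have h6 : (x + y - 1) ^ n ≤ 1 := pow_le_one₀ h4 h5
    calc f x y ≤ 20 ^ n * (x + y - 1) ^ n / (n !) := main n x hx y hy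
      _ ≤ 20 ^ n * 1 / (n !) := by
          rw [div_le_div_iff_of_pos_right (by positivity : (0:ℝ) < ((n !) : ℝ))]
          exact mul_le_mul_of_nonneg_left h6 (by positivity)
      _ = 20 ^ n / (n !) := by ring
  have : f x y ≤ 0 := ge_of_tendsto hlim (Filter.Eventually.of_forall hle)
  exact le_antisymm this (h0 x y)

set_option maxHeartbeats 1000000 in
theorem stmt_8 (G : ℝ → ℝ → ℝ)
    (hmeas : Measurable fun p : ℝ × ℝ => G p.1 p.2)
    (hrange : ∀ x ∈ Set.Icc (1/2:ℝ) 1, ∀ y ∈ Set.Icc (1/2:ℝ) 1,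
      G x y ∈ Set.Icc (0:ℝ) 1)
    (hbdry₁ : ∀ x ∈ Set.Icc (1/2:ℝ) 1, G x (1/2) = 1/(2*x))
    (hbdry₂ : ∀ y ∈ Set.Icc (1/2:ℝ) 1, G (1/2) y = 1/(2*y))
    (hbound : ∀ x ∈ Set.Icc (1/2:ℝ) 1, ∀ y ∈ Set.Icc (1/2:ℝ) 1,
      G x y ≤ min (1/(2*x)) (1/(2*y)))
    (H : ℝ → ℝ → ℝ) (hH : ∀ x y : ℝ, H x y = 1 - G x y / (1/(4*x*y)))
    (G₀ : ℝ → ℝ → ℝ) (hG₀ : ∀ x y : ℝ, G₀ x y = 1/(4*x*y))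
    (heq : ∀ x ∈ Set.Icc (1/2:ℝ) 1, ∀ y ∈ Set.Icc (1/2:ℝ) 1,
      H x y * (2 + H x y) / (16*x*y) =
        (∫ u in (1/2:ℝ)..x, ∫ v in (1/2:ℝ)..y,
            (G₀ u v)^2 * H u v * (2 - H u v))
          - x * ∫ v in (1/2:ℝ)..y, (G₀ x v)^2 * H x v * (2 - H x v)
          - y * ∫ u in (1/2:ℝ)..x, (G₀ u y)^2 * H u y * (2 - H u y)) :
    ∀ x ∈ Set.Icc (1/2:ℝ) 1, ∀ y ∈ Set.Icc (1/2:ℝ) 1,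
      H x y = 0 ∧ G x y = 1/(4*x*y) := by
  set d : ℝ → ℝ → ℝ := fun u v => G u v - 1/(4*u*v) with hd_def
  set e : ℝ → ℝ → ℝ := fun u v => (G u v)^2 - (1/(4*u*v))^2 with he_def
  set f : ℝ → ℝ → ℝ := fun u v => |d u v| with hf_def
  have hcm : Measurable fun p : ℝ × ℝ => 1/(4*p.1*p.2) :=
    measurable_const.div ((measurable_const.mul measurable_fst).mul measurable_snd)
  have hdm : Measurable fun p : ℝ × ℝ => d p.1 p.2 := hmeas.sub hcm
  have hem : Measurable fun p : ℝ × ℝ => e p.1 p.2 :=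
    (hmeas.pow_const 2).sub (hcm.pow_const 2)
  have hfm : Measurable fun p : ℝ × ℝ => f p.1 p.2 := hdm.abs
  have hG0b : ∀ u ∈ Set.Icc (1/2:ℝ) 1, ∀ v ∈ Set.Icc (1/2:ℝ) 1,
      1/(4*u*v) ∈ Set.Icc (1/4:ℝ) 1 := by
    intro u hu v hv
    have h1 : (1:ℝ) ≤ 4*u*v := by nlinarith [hu.1, hv.1]
    have h2 : 4*u*v ≤ 4 := by nlinarith [hu.2, hv.2, hu.1, hv.1]
    have h0 : (0:ℝ) < 4*u*v := by linarith
    constructor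
    · rw [div_le_div_iff₀ (by norm_num) h0]; linarith
    · rw [div_le_one h0]; exact h1
  have hd1 : ∀ u ∈ Set.Icc (1/2:ℝ) 1, ∀ v ∈ Set.Icc (1/2:ℝ) 1, |d u v| ≤ 1 := by
    intro u hu v hv
    have hG := hrange u hu v hv
    have hc := hG0b u hu v hv
    simp only [hd_def, abs_sub_le_iff]
    constructor
    · linarith [hG.2, hc.1]
    · linarith [hG.1, hc.2]
  have he2 : ∀ u ∈ Set.Icc (1/2:ℝ) 1, ∀ v ∈ Set.Icc (1/2:ℝ) 1, |e u v| ≤ 2 * |d u v| := by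
    intro u hu v hv
    have hG := hrange u hu v hv
    have hc := hG0b u hu v hv
    have hfac : e u v = d u v * (G u v + 1/(4*u*v)) := by
      simp only [he_def, hd_def]; ring
    rw [hfac, abs_mul]
    have habs : |G u v + 1/(4*u*v)| ≤ 2 := by
      rw [abs_of_nonneg (by linarith [hG.1, hc.1])]
      linarith [hG.2, hc.2]
    calc |d u v| * |G u v + 1/(4*u*v)| ≤ |d u v| * 2 :=
          mul_le_mul_of_nonneg_left habs (abs_nonneg _)
      _ = 2 * |d u v| := by ring
  have he2' : ∀ u ∈ Set.Icc (1/2:ℝ) 1, ∀ v ∈ Set.Icc (1/2:ℝ) 1, |e u v| ≤ 2 := by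
    intro u hu v hv
    calc |e u v| ≤ 2 * |d u v| := he2 u hu v hv
      _ ≤ 2 * 1 := by linarith [hd1 u hu v hv]
      _ = 2 := by ring
  have hint : ∀ u ∈ Set.Icc (1/2:ℝ) 1, ∀ v ∈ Set.Icc (1/2:ℝ) 1,
      (G₀ u v)^2 * H u v * (2 - H u v) = - e u v := by
    intro u hu v hv
    have hu0 : u ≠ 0 := (by linarith [hu.1] : (0:ℝ) < u).ne'
    have hv0 : v ≠ 0 := (by linarith [hv.1] : (0:ℝ) < v).ne'
    simp only [hG₀, hH, he_def]
    field_simp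
    ring
  -- measurability of the raw integrand sections
  have hHm1 : ∀ x : ℝ, Measurable fun v => (G₀ x v)^2 * H x v * (2 - H x v) := by
    intro x
    have hrw : (fun v => (G₀ x v)^2 * H x v * (2 - H x v))
        = fun v => (1/(4*x*v))^2 * (1 - G x v / (1/(4*x*v)))
            * (2 - (1 - G x v / (1/(4*x*v)))) := by
      funext v; rw [hG₀, hH]
    rw [hrw]
    have mv : Measurable fun v : ℝ => 1/(4*x*v) :=
      measurable_const.div (measurable_const.mul measurable_id)
    have mG : Measurable fun v => G x v := hmeas.comp measurable_prodMk_left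
    exact (((mv.pow_const 2).mul (measurable_const.sub (mG.div mv))).mul
      (measurable_const.sub (measurable_const.sub (mG.div mv))))
  -- single-integral estimates
  have hB : ∀ a ∈ Set.Icc (1/2:ℝ) 1, ∀ y ∈ Set.Icc (1/2:ℝ) 1,
      |∫ v in (1/2:ℝ)..y, e a v| ≤ 2 * ∫ v in (1/2:ℝ)..y, f a v := by
    intro a ha y hy
    have hmea : Measurable fun v => e a v := hem.comp measurable_prodMk_left
    have hmfa : Measurable fun v => f a v := hfm.comp measurable_prodMk_left
    have hIe : IntervalIntegrable (fun v => |e a v|) volume (1/2) y :=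
      II' hy.1 hmea.abs.aestronglyMeasurable (fun t ht => by
        rw [abs_abs]
        exact he2' a ha t ⟨le_of_lt ht.1, le_trans ht.2 hy.2⟩)
    have hIf : IntervalIntegrable (fun v => 2 * f a v) volume (1/2) y :=
      II' (C := 2) hy.1 (hmfa.const_mul 2).aestronglyMeasurable (fun t ht => by
        rw [abs_of_nonneg (by positivity : (0:ℝ) ≤ 2 * f a t)]
        have := hd1 a ha t ⟨le_of_lt ht.1, le_trans ht.2 hy.2⟩
        simp only [hf_def]
        linarith)
    calc |∫ v in (1/2:ℝ)..y, e a v| ≤ ∫ v in (1/2:ℝ)..y, |e a v| :=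
          intervalIntegral.abs_integral_le_integral_abs hy.1
      _ ≤ ∫ v in (1/2:ℝ)..y, 2 * f a v := by
          apply intervalIntegral.integral_mono_on hy.1 hIe hIf
          intro v hv
          exact he2 a ha v ⟨hv.1, le_trans hv.2 hy.2⟩
      _ = 2 * ∫ v in (1/2:ℝ)..y, f a v := intervalIntegral.integral_const_mul _ _
  have hC : ∀ b ∈ Set.Icc (1/2:ℝ) 1, ∀ x ∈ Set.Icc (1/2:ℝ) 1,
      |∫ u in (1/2:ℝ)..x, e u b| ≤ 2 * ∫ u in (1/2:ℝ)..x, f u b := by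
    intro b hb x hx
    have hmea : Measurable fun u => e u b := hem.comp (measurable_id.prodMk measurable_const)
    have hmfa : Measurable fun u => f u b := hfm.comp (measurable_id.prodMk measurable_const)
    have hIe : IntervalIntegrable (fun u => |e u b|) volume (1/2) x :=
      II' hx.1 hmea.abs.aestronglyMeasurable (fun t ht => by
        rw [abs_abs]
        exact he2' t ⟨le_of_lt ht.1, le_trans ht.2 hx.2⟩ b hb)
    have hIf : IntervalIntegrable (fun u => 2 * f u b) volume (1/2) x :=
      II' (C := 2) hx.1 (hmfa.const_mul 2).aestronglyMeasurable (fun t ht => by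
        rw [abs_of_nonneg (by positivity : (0:ℝ) ≤ 2 * f t b)]
        have := hd1 t ⟨le_of_lt ht.1, le_trans ht.2 hx.2⟩ b hb
        simp only [hf_def]
        linarith)
    calc |∫ u in (1/2:ℝ)..x, e u b| ≤ ∫ u in (1/2:ℝ)..x, |e u b| :=
          intervalIntegral.abs_integral_le_integral_abs hx.1
      _ ≤ ∫ u in (1/2:ℝ)..x, 2 * f u b := by
          apply intervalIntegral.integral_mono_on hx.1 hIe hIf
          intro u hu
          exact he2 u ⟨hu.1, le_trans hu.2 hx.2⟩ b hb
      _ = 2 * ∫ u in (1/2:ℝ)..x, f u b := intervalIntegral.integral_const_mul _ _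
  -- the Gronwall inequality for f
  have hineq : ∀ x ∈ Set.Icc (1/2:ℝ) 1, ∀ y ∈ Set.Icc (1/2:ℝ) 1,
      f x y ≤ 8 * ((∫ u in (1/2:ℝ)..x, ∫ v in (1/2:ℝ)..y, f u v)
        + (∫ v in (1/2:ℝ)..y, f x v) + (∫ u in (1/2:ℝ)..x, f u y)) := by
    intro x hx y hy
    have hx0 : (0:ℝ) < x := by linarith [hx.1]
    have hy0 : (0:ℝ) < y := by linarith [hy.1]
    have hBrw : (∫ v in (1/2:ℝ)..y, (G₀ x v)^2 * H x v * (2 - H x v))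
        = - ∫ v in (1/2:ℝ)..y, e x v := by
      rw [← intervalIntegral.integral_neg]
      apply intervalIntegral.integral_congr
      intro v hv
      rw [Set.uIcc_of_le hy.1] at hv
      exact hint x hx v ⟨hv.1, le_trans hv.2 hy.2⟩
    have hCrw : (∫ u in (1/2:ℝ)..x, (G₀ u y)^2 * H u y * (2 - H u y))
        = - ∫ u in (1/2:ℝ)..x, e u y := by
      rw [← intervalIntegral.integral_neg]
      apply intervalIntegral.integral_congr
      intro u hu
      rw [Set.uIcc_of_le hx.1] at hu
      exact hint u ⟨hu.1, le_trans hu.2 hx.2⟩ y hy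
    have hArw : (∫ u in (1/2:ℝ)..x, ∫ v in (1/2:ℝ)..y, (G₀ u v)^2 * H u v * (2 - H u v))
        = - ∫ u in (1/2:ℝ)..x, ∫ v in (1/2:ℝ)..y, e u v := by
      rw [← intervalIntegral.integral_neg]
      apply intervalIntegral.integral_congr
      intro u hu
      rw [Set.uIcc_of_le hx.1] at hu
      show (∫ v in (1/2:ℝ)..y, (G₀ u v)^2 * H u v * (2 - H u v))
        = - ∫ v in (1/2:ℝ)..y, e u v
      rw [← intervalIntegral.integral_neg]
      apply intervalIntegral.integral_congr
      intro v hv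
      rw [Set.uIcc_of_le hy.1] at hv
      exact hint u ⟨hu.1, le_trans hu.2 hx.2⟩ v ⟨hv.1, le_trans hv.2 hy.2⟩
    have hLHS : H x y * (2 + H x y) / (16*x*y) = x*y*(e x y) - d x y := by
      simp only [hH, he_def, hd_def]
      have hx0' : x ≠ 0 := hx0.ne'
      have hy0' : y ≠ 0 := hy0.ne'
      field_simp
      ring
    -- integrability of the raw inner integrand
    have hIb : IntervalIntegrable (fun v => (G₀ x v)^2 * H x v * (2 - H x v))
        volume (1/2) y :=
      II' hy.1 (hHm1 x).aestronglyMeasurable (fun t ht => by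
        rw [hint x hx t ⟨le_of_lt ht.1, le_trans ht.2 hy.2⟩, abs_neg]
        exact he2' x hx t ⟨le_of_lt ht.1, le_trans ht.2 hy.2⟩)
    -- split the middle integral (the integrand of the x-term swallows the y-term)
    have h2 : (∫ v in (1/2:ℝ)..y, ((G₀ x v)^2 * H x v * (2 - H x v)
          - y * ∫ u in (1/2:ℝ)..x, (G₀ u y)^2 * H u y * (2 - H u y)))
        = (- ∫ v in (1/2:ℝ)..y, e x v)
          - (y - 1/2) * (y * - ∫ u in (1/2:ℝ)..x, e u y) := by
      rw [intervalIntegral.integral_sub hIb intervalIntegrable_const,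
        intervalIntegral.integral_const, smul_eq_mul, hBrw, hCrw]
    have h := heq x hx y hy
    rw [h2, hArw, hLHS] at h
    -- now bound everything
    set A' : ℝ := ∫ u in (1/2:ℝ)..x, ∫ v in (1/2:ℝ)..y, e u v with hA'_def
    set B' : ℝ := ∫ v in (1/2:ℝ)..y, e x v with hB'_def
    set C' : ℝ := ∫ u in (1/2:ℝ)..x, e u y with hC'_def
    have h' : x*y*(e x y) - d x y = (- A') + x * B' + (x*(y-1/2)*y) * (- C') := by
      rw [h]; ring
    have hxyB : |x * B'| ≤ |B'| := by
      rw [abs_mul, abs_of_pos hx0]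
      nlinarith [abs_nonneg B', hx.2]
    have hxyC : |(x*(y-1/2)*y) * (- C')| ≤ |C'| := by
      rw [abs_mul, abs_neg]
      have ht0 : 0 ≤ x*(y-1/2)*y :=
        mul_nonneg (mul_nonneg hx0.le (by linarith [hy.1])) hy0.le
      have ht1 : x*(y-1/2)*y ≤ 1 := by
        have h1 : x*(y-1/2) ≤ 1*(1/2) :=
          mul_le_mul hx.2 (by linarith [hy.2]) (by linarith [hy.1]) (by norm_num)
        have h2' : x*(y-1/2)*y ≤ (1*(1/2))*y := mul_le_mul_of_nonneg_right h1 hy0.le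
        linarith [hy.2]
      rw [abs_of_nonneg ht0]
      nlinarith [abs_nonneg C']
    have habs : |x*y*(e x y) - d x y| ≤ |A'| + |B'| + |C'| := by
      rw [h']
      calc |(- A') + x * B' + (x*(y-1/2)*y) * (- C')|
          ≤ |(- A')| + |x * B'| + |(x*(y-1/2)*y) * (- C')| := abs_add_three _ _ _
        _ ≤ |A'| + |B'| + |C'| := by
            rw [abs_neg]
            linarith
    -- factorization lower bound
    have hfac : x*y*(e x y) - d x y = d x y * (x*y*G x y - 3/4) := by
      simp only [he_def, hd_def]
      have hx0' : x ≠ 0 := hx0.ne'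
      have hy0' : y ≠ 0 := hy0.ne'
      field_simp
      ring
    have hGb : x*y*G x y ≤ 1/2 := by
      have h2x : (0:ℝ) < 2*x := by linarith
      have hmin := le_trans (hbound x hx y hy) (min_le_left _ _)
      have h1 : G x y * (2*x) ≤ 1 := by
        rw [← le_div_iff₀ h2x]; exact hmin
      nlinarith [mul_le_mul_of_nonneg_left h1 (le_of_lt hy0), hy.2,
        (hrange x hx y hy).1]
    have hG0' : 0 ≤ x*y*G x y := by
      have := (hrange x hx y hy).1
      positivity
    have hw : 1/4 ≤ |x*y*G x y - 3/4| := by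
      rw [abs_of_neg (by linarith)]
      linarith
    have hdle : |d x y| ≤ 4 * |x*y*(e x y) - d x y| := by
      rw [hfac, abs_mul]
      nlinarith [mul_le_mul_of_nonneg_left hw (abs_nonneg (d x y)), abs_nonneg (d x y)]
    -- double-integral bound
    have hA : |A'| ≤ 2 * ∫ u in (1/2:ℝ)..x, ∫ v in (1/2:ℝ)..y, f u v := by
      have hImeas : StronglyMeasurable (fun u => ∫ v in (1/2:ℝ)..y, e u v) :=
        paramMeas hem _ _
      have hIe : IntervalIntegrable (fun u => |∫ v in (1/2:ℝ)..y, e u v|) volume (1/2) x :=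
        II' (C := 2) hx.1 hImeas.measurable.abs.aestronglyMeasurable (fun t ht => by
          rw [abs_abs]
          have ht' : t ∈ Set.Icc (1/2:ℝ) 1 := ⟨le_of_lt ht.1, le_trans ht.2 hx.2⟩
          calc |∫ v in (1/2:ℝ)..y, e t v| ≤ ∫ v in (1/2:ℝ)..y, |e t v| :=
                intervalIntegral.abs_integral_le_integral_abs hy.1
            _ ≤ ∫ v in (1/2:ℝ)..y, (2:ℝ) := by
                apply intervalIntegral.integral_mono_on hy.1 ?_ intervalIntegrable_const
                · intro v hv
                  exact he2' t ht' v ⟨hv.1, le_trans hv.2 hy.2⟩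
                · exact II' hy.1 (hem.comp measurable_prodMk_left).abs.aestronglyMeasurable
                    (fun s hs => by
                      rw [abs_abs]
                      exact he2' t ht' s ⟨le_of_lt hs.1, le_trans hs.2 hy.2⟩)
            _ = (y - 1/2) * 2 := by rw [intervalIntegral.integral_const, smul_eq_mul]
            _ ≤ 2 := by linarith [hy.2])
      have hIfmeas : StronglyMeasurable (fun u => ∫ v in (1/2:ℝ)..y, f u v) :=
        paramMeas hfm _ _
      have hIf : IntervalIntegrable (fun u => 2 * ∫ v in (1/2:ℝ)..y, f u v) volume (1/2) x :=
        II' (C := 2) hx.1 ((hIfmeas.measurable.const_mul 2).aestronglyMeasurable) (fun t ht => by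
          have ht' : t ∈ Set.Icc (1/2:ℝ) 1 := ⟨le_of_lt ht.1, le_trans ht.2 hx.2⟩
          rw [abs_mul, abs_of_nonneg (by norm_num : (0:ℝ) ≤ 2)]
          have h1 : |∫ v in (1/2:ℝ)..y, f t v| ≤ 1 := by
            calc |∫ v in (1/2:ℝ)..y, f t v| ≤ ∫ v in (1/2:ℝ)..y, |f t v| :=
                  intervalIntegral.abs_integral_le_integral_abs hy.1
              _ ≤ ∫ v in (1/2:ℝ)..y, (1:ℝ) := by
                  apply intervalIntegral.integral_mono_on hy.1 ?_ intervalIntegrable_const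
                  · intro v hv
                    simp only [hf_def, abs_abs]
                    exact hd1 t ht' v ⟨hv.1, le_trans hv.2 hy.2⟩
                  · exact II' hy.1 (hfm.comp measurable_prodMk_left).abs.aestronglyMeasurable
                      (fun s hs => by
                        simp only [hf_def, abs_abs]
                        exact hd1 t ht' s ⟨le_of_lt hs.1, le_trans hs.2 hy.2⟩)
              _ = (y - 1/2) * 1 := by rw [intervalIntegral.integral_const, smul_eq_mul]
              _ ≤ 1 := by linarith [hy.2]
          linarith)
      calc |A'| ≤ ∫ u in (1/2:ℝ)..x, |∫ v in (1/2:ℝ)..y, e u v| := by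
            rw [hA'_def]
            exact intervalIntegral.abs_integral_le_integral_abs hx.1
        _ ≤ ∫ u in (1/2:ℝ)..x, 2 * ∫ v in (1/2:ℝ)..y, f u v := by
            apply intervalIntegral.integral_mono_on hx.1 hIe hIf
            intro u hu
            exact hB u ⟨hu.1, le_trans hu.2 hx.2⟩ y hy
        _ = 2 * ∫ u in (1/2:ℝ)..x, ∫ v in (1/2:ℝ)..y, f u v :=
            intervalIntegral.integral_const_mul _ _
    have hBx : |B'| ≤ 2 * ∫ v in (1/2:ℝ)..y, f x v := hB x hx y hy
    have hCy : |C'| ≤ 2 * ∫ u in (1/2:ℝ)..x, f u y := hC y hy x hx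
    simp only [hf_def]
    calc |d x y| ≤ 4 * |x*y*(e x y) - d x y| := hdle
      _ ≤ 4 * (|A'| + |B'| + |C'|) := by linarith
      _ ≤ 4 * ((2 * ∫ u in (1/2:ℝ)..x, ∫ v in (1/2:ℝ)..y, f u v)
          + (2 * ∫ v in (1/2:ℝ)..y, f x v) + (2 * ∫ u in (1/2:ℝ)..x, f u y)) := by
          linarith
      _ = 8 * ((∫ u in (1/2:ℝ)..x, ∫ v in (1/2:ℝ)..y, f u v)
          + (∫ v in (1/2:ℝ)..y, f x v) + (∫ u in (1/2:ℝ)..x, f u y)) := by ring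
  have hzero := gronwall f hfm (fun x y => abs_nonneg _)
    (fun x hx y hy => hd1 x hx y hy) hineq
  intro x hx y hy
  have hd0 : d x y = 0 := abs_eq_zero.1 (hzero x hx y hy)
  have hGeq : G x y = 1/(4*x*y) := by
    have h := hd0
    simp only [hd_def] at h
    linarith
  refine ⟨?_, hGeq⟩
  rw [hH, hGeq]
  have hx0 : (0:ℝ) < x := by linarith [hx.1]
  have hy0 : (0:ℝ) < y := by linarith [hy.1]
  rw [div_self (by positivity : (1:ℝ)/(4*x*y) ≠ 0)]
  ring
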